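/- In the basic multimodal logic K over a finite set of actions, a Kripke model M globally satisfies an action theory T = ⟨S, E, X, I⟩ with dependence relation ⇝ and M is the big model for T (worlds = all valuations of S, and R_a relates w to w' iff every effect or inexecutability law A → [a]C in E ∪ I with w ⊨ A has w' ⊨ C, subject to the ⇝-frame conditions) if and only if T satisfies Postulate PS: every classical (non-modal) formula φ that is a global dependence-based consequence of S ∪ E ∪ X ∪ I is already a classical consequence of S alone. -/

import Mathlib

/-! Classical propositional formulas. -/
inductive PForm (α : Type) : Type
  | atom : α → PForm α
  | fls  : PForm α
  | not  : PForm α → PForm α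
  | and  : PForm α → PForm α → PForm α
  | or   : PForm α → PForm α → PForm α
  | imp  : PForm α → PForm α → PForm α

def PForm.Sat {α : Type} (v : α → Prop) : PForm α → Prop
  | atom p => v p
  | fls => False
  | not φ => ¬ Sat v φ
  | and φ ψ => Sat v φ ∧ Sat v ψ
  | or φ ψ => Sat v φ ∨ Sat v ψ
  | imp φ ψ => Sat v φ → Sat v ψ

/-- Classical (propositional) global consequence. -/
def EntailsCl {α : Type} (Γ : Set (PForm α)) (φ : PForm α) : Prop :=
  ∀ v : α → Prop, (∀ ψ ∈ Γ, PForm.Sat v ψ) → PForm.Sat v φ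

/-- Multimodal formulas with one box per action. -/
inductive MForm (Act α : Type) : Type
  | atom : α → MForm Act α
  | fls  : MForm Act α
  | not  : MForm Act α → MForm Act α
  | and  : MForm Act α → MForm Act α → MForm Act α
  | or   : MForm Act α → MForm Act α → MForm Act α
  | imp  : MForm Act α → MForm Act α → MForm Act α
  | box  : Act → MForm Act α → MForm Act α

def PForm.toM {Act α : Type} : PForm α → MForm Act α
  | .atom p => .atom p
  | .fls => .fls
  | .not φ => .not φ.toM
  | .and φ ψ => .and φ.toM ψ.toM
  | .or φ ψ => .or φ.toM ψ.toM
  | .imp φ ψ => .imp φ.toM ψ.toM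

/-- A Kripke model for multimodal K. -/
structure KModel (Act α : Type) where
  W : Type
  R : Act → W → W → Prop
  V : W → α → Prop

def MForm.Sat {Act α : Type} (M : KModel Act α) : M.W → MForm Act α → Prop
  | w, atom p => M.V w p
  | _, fls => False
  | w, not φ => ¬ Sat M w φ
  | w, and φ ψ => Sat M w φ ∧ Sat M w ψ
  | w, or φ ψ => Sat M w φ ∨ Sat M w ψ
  | w, imp φ ψ => Sat M w φ → Sat M w ψ
  | w, box a φ => ∀ w', M.R a w w' → Sat M w' φ

/-- Global truth in a model. -/
def Glob {Act α : Type} (M : KModel Act α) (Φ : MForm Act α) : Prop :=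
  ∀ w : M.W, MForm.Sat M w Φ

/-- Global consequence in multimodal K. -/
def ConsK {Act α : Type} (Γ : Set (MForm Act α)) (Φ : MForm Act α) : Prop :=
  ∀ M : KModel Act α, (∀ Ψ ∈ Γ, Glob M Ψ) → Glob M Φ

/-- Literals. -/
abbrev Lit (α : Type) := α × Bool

def Lit.Sat {α : Type} (v : α → Prop) (l : Lit α) : Prop :=
  if l.2 then v l.1 else ¬ v l.1

/-- A dependence relation `⇝ ⊆ Act × Lit`. -/
abbrev Dep (Act α : Type) := Act → Lit α → Prop

/-- `⇝`-models: along `R a`, literals independent of `a` persist. -/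
def IsDepModel {Act α : Type} (dep : Dep Act α) (M : KModel Act α) : Prop :=
  ∀ (a : Act) (w w' : M.W), M.R a w w' → ∀ p : α,
    (¬ dep a (p, true) → ¬ M.V w p → ¬ M.V w' p) ∧
    (¬ dep a (p, false) → M.V w p → M.V w' p)

/-- Dependence-based global consequence. -/
def ConsDep {Act α : Type} (dep : Dep Act α) (Γ : Set (MForm Act α)) (Φ : MForm Act α) : Prop :=
  ∀ M : KModel Act α, IsDepModel dep M → (∀ Ψ ∈ Γ, Glob M Ψ) → Glob M Φ

/-- An action theory: static laws `S`, effect laws `E` (antecedent/consequent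
pairs), executability laws `X` (antecedents), inexecutability laws `I`
(antecedents). -/
structure ActionTheory (Act α : Type) where
  S : Set (PForm α)
  E : Act → Set (PForm α × PForm α)
  X : Act → Set (PForm α)
  I : Act → Set (PForm α)

/-- `⟨a⟩Φ`. -/
def MForm.diam {Act α : Type} (a : Act) (Φ : MForm Act α) : MForm Act α :=
  .not (.box a (.not Φ))

/-- Effect law `A → [a]C`. -/
def effLaw {Act α : Type} (a : Act) (e : PForm α × PForm α) : MForm Act α :=
  .imp e.1.toM (.box a e.2.toM)

/-- Executability law `A → ⟨a⟩⊤`. -/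
def exeLaw {Act α : Type} (a : Act) (A : PForm α) : MForm Act α :=
  .imp A.toM (MForm.diam a (.not .fls))

/-- Inexecutability law `A → [a]⊥`. -/
def inexLaw {Act α : Type} (a : Act) (A : PForm α) : MForm Act α :=
  .imp A.toM (.box a .fls)

variable {Act α : Type}

def staticForms (T : ActionTheory Act α) : Set (MForm Act α) := PForm.toM '' T.S
def effForms (T : ActionTheory Act α) (a : Act) : Set (MForm Act α) := effLaw a '' T.E a
def exeForms (T : ActionTheory Act α) (a : Act) : Set (MForm Act α) := exeLaw a '' T.X a
def inexForms (T : ActionTheory Act α) (a : Act) : Set (MForm Act α) := inexLaw a '' T.I a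

/-- The action theory of the single action `a`:  `S ∪ E_a ∪ X_a ∪ I_a`. -/
def formsFor (T : ActionTheory Act α) (a : Act) : Set (MForm Act α) :=
  staticForms T ∪ effForms T a ∪ exeForms T a ∪ inexForms T a

/-- The whole action theory:  `S ∪ E ∪ X ∪ I`. -/
def allForms (T : ActionTheory Act α) : Set (MForm Act α) :=
  staticForms T ∪ (⋃ a, effForms T a) ∪ (⋃ a, exeForms T a) ∪ (⋃ a, inexForms T a)

/-- Postulate PS for action `a`: no implicit static laws. -/
def PS (T : ActionTheory Act α) (dep : Dep Act α) (a : Act) : Prop :=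
  ∀ φ : PForm α, ConsDep dep (formsFor T a) φ.toM → EntailsCl T.S φ

/-- Postulate PS*: no implicit static laws for the whole theory. -/
def PSstar (T : ActionTheory Act α) (dep : Dep Act α) : Prop :=
  ∀ φ : PForm α, ConsDep dep (allForms T) φ.toM → EntailsCl T.S φ

/-- Postulate PI for action `a`: no implicit inexecutability laws. -/
def PIpost (T : ActionTheory Act α) (dep : Dep Act α) (a : Act) : Prop :=
  ∀ A : PForm α, ConsDep dep (formsFor T a) (inexLaw a A) →
    ConsK (staticForms T ∪ inexForms T a) (inexLaw a A)

/-- Postulate PI*: no implicit inexecutability laws for the whole theory. -/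
def PIstar (T : ActionTheory Act α) (dep : Dep Act α) : Prop :=
  ∀ (a : Act) (A : PForm α), ConsDep dep (allForms T) (inexLaw a A) →
    ConsK (staticForms T ∪ ⋃ a', inexForms T a') (inexLaw a A)

/-- The big model for a theory and a dependence relation: worlds are all
valuations of `S`; `R a` is maximal compatible with `E ∪ I` and `⇝`. -/
def bigModel (T : ActionTheory Act α) (dep : Dep Act α) : KModel Act α where
  W := {v : α → Prop // ∀ φ ∈ T.S, PForm.Sat v φ}
  R a w w' :=
    (∀ e ∈ T.E a, PForm.Sat w.1 e.1 → PForm.Sat w'.1 e.2) ∧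
    (∀ A ∈ T.I a, ¬ PForm.Sat w.1 A) ∧
    (∀ p : α, (¬ dep a (p, true) → ¬ w.1 p → ¬ w'.1 p) ∧
              (¬ dep a (p, false) → w.1 p → w'.1 p))
  V w p := w.1 p

lemma satToM (M : KModel Act α) (w : M.W) (φ : PForm α) :
    MForm.Sat M w φ.toM ↔ PForm.Sat (M.V w) φ := by
  induction φ <;> simp [PForm.toM, MForm.Sat, PForm.Sat, *]

lemma sat_congr (v v' : α → Prop) (h : ∀ p, v p ↔ v' p) (φ : PForm α) :
    PForm.Sat v φ ↔ PForm.Sat v' φ := by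
  induction φ <;> simp [PForm.Sat, *]

open Classical in
noncomputable def litForm (v : α → Prop) (p : α) : PForm α :=
  if v p then .atom p else .not (.atom p)

lemma litForm_sat (u v : α → Prop) (p : α) :
    PForm.Sat u (litForm v p) ↔ (u p ↔ v p) := by
  by_cases h : v p <;> simp [litForm, h, PForm.Sat]

noncomputable def listDescr (v : α → Prop) : List α → PForm α
  | [] => .not .fls
  | p :: l => .and (litForm v p) (listDescr v l)

lemma listDescr_sat (u v : α → Prop) (l : List α) :
    PForm.Sat u (listDescr v l) ↔ ∀ p ∈ l, (u p ↔ v p) := by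
  induction l with
  | nil => simp [listDescr, PForm.Sat]
  | cons p l ih => simp [listDescr, PForm.Sat, litForm_sat, ih]

noncomputable def descr [Fintype α] (v : α → Prop) : PForm α :=
  listDescr v (Finset.univ : Finset α).toList

lemma descr_sat [Fintype α] (u v : α → Prop) :
    PForm.Sat u (descr v) ↔ ∀ p, (u p ↔ v p) := by
  simp [descr, listDescr_sat]

lemma bigModel_isDep (T : ActionTheory Act α) (dep : Dep Act α) :
    IsDepModel dep (bigModel T dep) := by
  intro a w w' hR p
  exact (hR.2.2 p)

/-- Theorem 1: the big model is a model of the action theory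
iff the theory satisfies Postulate PS. -/
theorem stmt_6 [Fintype Act] [Fintype α] (T : ActionTheory Act α) (dep : Dep Act α) :
    (∀ Φ ∈ allForms T, Glob (bigModel T dep) Φ) ↔ PSstar T dep := by
  constructor
  · intro h φ hcons v hvS
    have hg : Glob (bigModel T dep) φ.toM := hcons _ (bigModel_isDep T dep) h
    have := hg ⟨v, hvS⟩
    exact (satToM (bigModel T dep) ⟨v, hvS⟩ φ).1 this
  · intro hPS Φ hΦ
    rcases hΦ with ((hst | heff) | hexe) | hinex
    · -- static laws
      rcases hst with ⟨ψ, hψ, rfl⟩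
      intro w
      rw [satToM]
      exact w.2 ψ hψ
    · -- effect laws
      rcases Set.mem_iUnion.1 heff with ⟨a, e, he, rfl⟩
      intro w
      intro hA w' hR
      rw [satToM] at hA ⊢
      exact hR.1 e he hA
    · -- executability laws
      rcases Set.mem_iUnion.1 hexe with ⟨a, A, hAX, rfl⟩
      intro w
      intro hA
      rw [satToM] at hA
      change ¬ ∀ w', (bigModel T dep).R a w w' → _
      intro hno
      -- hno w' hR : ¬ ¬ False, i.e. provides False from any successor
      have hnosucc : ∀ w', ¬ (bigModel T dep).R a w w' := by
        intro w' hR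
        exact (hno w' hR) (fun h => h)
      -- derive a classical consequence contradicting PS*
      have hcons : ConsDep dep (allForms T) (PForm.not (descr w.1)).toM := by
        intro M hdep hglob u
        rw [satToM]
        intro hd
        have hag : ∀ p, M.V u p ↔ w.1 p := (descr_sat _ _).1 hd
        -- u satisfies A
        have huA : PForm.Sat (M.V u) A := (sat_congr _ _ hag A).2 hA
        -- executability law holds in M
        have hex : Glob M (exeLaw a A) := by
          apply hglob
          exact Or.inl (Or.inr (Set.mem_iUnion.2 ⟨a, ⟨A, hAX, rfl⟩⟩))
        have := hex u ((satToM M u A).2 huA)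
        -- extract a successor u'
        have hexists : ∃ u', M.R a u u' := by
          by_contra hne
          push_neg at hne
          exact this (fun u' hR => absurd hR (hne u'))
        obtain ⟨u', hRu⟩ := hexists
        -- the valuation of u' is a world of the big model
        have hS' : ∀ ψ ∈ T.S, PForm.Sat (M.V u') ψ := by
          intro ψ hψ
          have := hglob ψ.toM (Or.inl (Or.inl (Or.inl ⟨ψ, hψ, rfl⟩))) u'
          rwa [satToM] at this
        refine hnosucc ⟨M.V u', hS'⟩ ⟨?_, ?_, ?_⟩
        · intro e he hAe
          have hglobE : Glob M (effLaw a e) := by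
            apply hglob
            exact Or.inl (Or.inl (Or.inr (Set.mem_iUnion.2 ⟨a, ⟨e, he, rfl⟩⟩)))
          have huAe : MForm.Sat M u e.1.toM :=
            (satToM M u e.1).2 ((sat_congr _ _ hag e.1).2 hAe)
          have := hglobE u huAe u' hRu
          rwa [satToM] at this
        · intro A' hA' hAw
          have hglobI : Glob M (inexLaw a A') := by
            apply hglob
            exact Or.inr (Set.mem_iUnion.2 ⟨a, ⟨A', hA', rfl⟩⟩)
          have huA' : MForm.Sat M u A'.toM :=
            (satToM M u A').2 ((sat_congr _ _ hag A').2 hAw)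
          exact hglobI u huA' u' hRu
        · intro p
          have hp := hdep a u u' hRu p
          constructor
          · intro hnd hnw
            exact hp.1 hnd (fun h => hnw ((hag p).1 h))
          · intro hnd hw
            exact hp.2 hnd ((hag p).2 hw)
      have := hPS _ hcons w.1 w.2
      exact this ((descr_sat w.1 w.1).2 (fun p => Iff.rfl))
    · -- inexecutability laws
      rcases Set.mem_iUnion.1 hinex with ⟨a, A, hAI, rfl⟩
      intro w
      intro hA w' hR
      rw [satToM] at hA
      exact hR.2.1 A hAI hA
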